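/- Let G(n) and H(n) be star graphs with center node 1 and 4n+1 leaves, where in G(n) the center has 2n+1 leaves connected by relation r1 and 2n leaves connected by relation r2, while in H(n) the center has 2n leaves connected by r1 and 2n+1 leaves connected by r2 (no unary predicates). Then for every FOC2 formula φ(x) in which every counting threshold is at most m, φ cannot distinguish (G(m),1) from (H(m),1): (G(m),1) ⊨ φ iff (H(m),1) ⊨ φ. -/

import Mathlib

inductive Var : Type
  | x | y
deriving DecidableEq

structure MRGraph (P1 P2 : Type) where
  V : Type
  [fintV : Fintype V]
  [decV : DecidableEq V]
  unary : P1 → V → Prop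
  rel : P2 → V → V → Prop
  [decU : ∀ p, DecidablePred (unary p)]
  [decR : ∀ r, DecidableRel (rel r)]

attribute [instance] MRGraph.fintV MRGraph.decV MRGraph.decU MRGraph.decR

inductive FOC2 (P1 P2 : Type) : Type
  | tru : FOC2 P1 P2
  | atom : P1 → Var → FOC2 P1 P2
  | rel : P2 → Var → Var → FOC2 P1 P2
  | and : FOC2 P1 P2 → FOC2 P1 P2 → FOC2 P1 P2
  | or : FOC2 P1 P2 → FOC2 P1 P2 → FOC2 P1 P2
  | not : FOC2 P1 P2 → FOC2 P1 P2
  | exge : ℕ → Var → FOC2 P1 P2 → FOC2 P1 P2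

variable {P1 P2 : Type}

/-- Satisfaction of a `FOC2` formula in a multi-relational graph under an assignment. -/
def MRGraph.sat (G : MRGraph P1 P2) : (Var → G.V) → FOC2 P1 P2 → Prop
  | _, .tru => True
  | σ, .atom p v => G.unary p (σ v)
  | σ, .rel r u w => G.rel r (σ u) (σ w)
  | σ, .and φ ψ => G.sat σ φ ∧ G.sat σ ψ
  | σ, .or φ ψ => G.sat σ φ ∨ G.sat σ ψ
  | σ, .not φ => ¬ G.sat σ φ
  | σ, .exge n v φ => ∃ S : Finset G.V, S.card = n ∧ ∀ a ∈ S, G.sat (Function.update σ v a) φ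

/-- Quantifier depth. -/
def FOC2.depth : FOC2 P1 P2 → ℕ
  | .tru => 0
  | .atom _ _ => 0
  | .rel _ _ _ => 0
  | .and φ ψ => max φ.depth ψ.depth
  | .or φ ψ => max φ.depth ψ.depth
  | .not φ => φ.depth
  | .exge _ _ φ => φ.depth + 1

/-- All counting thresholds are at most `m`. -/
def FOC2.thresholdsLe (m : ℕ) : FOC2 P1 P2 → Prop
  | .tru => True
  | .atom _ _ => True
  | .rel _ _ _ => True
  | .and φ ψ => φ.thresholdsLe m ∧ ψ.thresholdsLe m
  | .or φ ψ => φ.thresholdsLe m ∧ ψ.thresholdsLe m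
  | .not φ => φ.thresholdsLe m
  | .exge n _ φ => n ≤ m ∧ φ.thresholdsLe m

/-- Free variables. -/
def FOC2.freeVars : FOC2 P1 P2 → Finset Var
  | .tru => ∅
  | .atom _ v => {v}
  | .rel _ u w => {u, w}
  | .and φ ψ => φ.freeVars ∪ ψ.freeVars
  | .or φ ψ => φ.freeVars ∪ ψ.freeVars
  | .not φ => φ.freeVars
  | .exge _ v φ => φ.freeVars \ {v}

/-- Parse-tree size. -/
def FOC2.size : FOC2 P1 P2 → ℕ
  | .tru => 1
  | .atom _ _ => 1
  | .rel _ _ _ => 1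
  | .and φ ψ => φ.size + ψ.size + 1
  | .or φ ψ => φ.size + ψ.size + 1
  | .not φ => φ.size + 1
  | .exge _ _ φ => φ.size + 1


/-- `r`-edge predicate from the centre of a star with `p` r1-leaves (nodes `1..p`)
followed by r2-leaves (nodes `p+1..`). `r = true` is `r1`, `r = false` is `r2`. -/
def starEdge (p : ℕ) (r : Bool) (i : ℕ) : Prop :=
  (r = true ∧ 1 ≤ i ∧ i ≤ p) ∨ (r = false ∧ p + 1 ≤ i)

instance (p : ℕ) (r : Bool) (i : ℕ) : Decidable (starEdge p r i) := by
  unfold starEdge; infer_instance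

/-- Star graph: node `0` is the centre, nodes `1..p` are `r1`-leaves and
nodes `p+1..p+q` are `r2`-leaves; edges are symmetric. -/
def star (p q : ℕ) : MRGraph Empty Bool where
  V := Fin (p + q + 1)
  unary := fun e _ => e.elim
  rel := fun r a b =>
    (a.val = 0 ∧ starEdge p r b.val) ∨ (b.val = 0 ∧ starEdge p r a.val)
  decU := fun e => e.elim
  decR := fun _ _ _ => by infer_instance

/-- The centre of a star graph. -/
def starCenter (p q : ℕ) : (star p q).V := ⟨0, Nat.succ_pos _⟩

/-- Class of a leaf index: 0 = centre, 1 = r1-leaf, 2 = r2-leaf. -/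
def clsN (p i : ℕ) : ℕ := if i = 0 then 0 else if i ≤ p then 1 else 2

/-- Class of a node of the star graph. -/
def cls (p q : ℕ) (v : (star p q).V) : ℕ := clsN p v.val

def rcls (r : Bool) : ℕ := if r then 1 else 2

lemma clsN_eq_zero (p i : ℕ) : clsN p i = 0 ↔ i = 0 := by
  unfold clsN; split_ifs <;> first | contradiction | omega | (simp; omega) | simp_all

lemma clsN_eq_one (p i : ℕ) : clsN p i = 1 ↔ 1 ≤ i ∧ i ≤ p := by
  unfold clsN; split_ifs <;> first | contradiction | omega | (simp; omega) | simp_all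

lemma clsN_eq_two (p i : ℕ) : clsN p i = 2 ↔ p + 1 ≤ i := by
  unfold clsN; split_ifs <;> first | contradiction | omega | (simp; omega) | simp_all

lemma rel_iff (p q : ℕ) (r : Bool) (a b : (star p q).V) :
    (star p q).rel r a b ↔
      ((cls p q a = 0 ∧ cls p q b = rcls r) ∨ (cls p q b = 0 ∧ cls p q a = rcls r)) := by
  show (a.val = 0 ∧ starEdge p r b.val) ∨ (b.val = 0 ∧ starEdge p r a.val) ↔ _
  unfold cls rcls starEdge clsN
  cases r <;> split_ifs <;> simp_all <;> omega

open Classical in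
lemma sat_exge_iff (G : MRGraph P1 P2) (σ : Var → G.V) (n : ℕ) (v : Var) (φ : FOC2 P1 P2) :
    G.sat σ (.exge n v φ) ↔
      n ≤ (Finset.univ.filter (fun a => G.sat (Function.update σ v a) φ)).card := by
  constructor
  · rintro ⟨S, hcard, hS⟩
    calc n = S.card := hcard.symm
      _ ≤ _ := Finset.card_le_card
          (fun a ha => Finset.mem_filter.mpr ⟨Finset.mem_univ _, hS a ha⟩)
  · intro h
    obtain ⟨t, ht, hcard⟩ := Finset.exists_subset_card_eq h
    exact ⟨t, hcard, fun a ha => (Finset.mem_filter.mp (ht ha)).2⟩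

lemma lower_bound (p q m c : ℕ) (hc : (c = 1 ∧ m ≤ p) ∨ (c = 2 ∧ m ≤ q))
    (T : Finset (star p q).V) (hT : ∀ a, cls p q a = c → a ∈ T) : m ≤ T.card := by
  classical
  rcases hc with ⟨rfl, hm⟩ | ⟨rfl, hm⟩
  · have := Finset.card_le_card_of_injOn
      (f := fun i : Fin m => (⟨i.val + 1, by omega⟩ : (star p q).V))
      (s := Finset.univ) (t := T)
      (fun i _ => hT _ (show clsN p (i.val + 1) = 1 from (clsN_eq_one _ _).mpr (by omega)))
      (fun i _ j _ h => by
        have : i.val + 1 = j.val + 1 := congrArg Fin.val h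
        exact Fin.ext (by omega))
    simpa using this
  · have := Finset.card_le_card_of_injOn
      (f := fun i : Fin m => (⟨p + 1 + i.val, by omega⟩ : (star p q).V))
      (s := Finset.univ) (t := T)
      (fun i _ => hT _ (show clsN p (p + 1 + i.val) = 2 from (clsN_eq_two _ _).mpr (by omega)))
      (fun i _ j _ h => by
        have : p + 1 + i.val = p + 1 + j.val := congrArg Fin.val h
        exact Fin.ext (by omega))
    simpa using this

lemma transfer12 (m : ℕ) (a : (star (2*m+1) (2*m)).V) (hm : 1 ≤ m) :
    ∃ b : (star (2*m) (2*m+1)).V, cls (2*m) (2*m+1) b = cls (2*m+1) (2*m) a := by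
  have ha := a.isLt
  by_cases h0 : a.val = 0
  · refine ⟨⟨0, by omega⟩, ?_⟩
    show clsN (2*m) 0 = clsN (2*m+1) a.val
    unfold clsN; split_ifs <;> first | contradiction | omega | (simp; omega) | simp_all
  by_cases h1 : a.val ≤ 2*m+1
  · refine ⟨⟨1, by omega⟩, ?_⟩
    show clsN (2*m) 1 = clsN (2*m+1) a.val
    unfold clsN; split_ifs <;> first | contradiction | omega | (simp; omega) | simp_all
  · refine ⟨⟨2*m+1, by omega⟩, ?_⟩
    show clsN (2*m) (2*m+1) = clsN (2*m+1) a.val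
    unfold clsN; split_ifs <;> first | contradiction | omega | (simp; omega) | simp_all

lemma transfer21 (m : ℕ) (a : (star (2*m) (2*m+1)).V) (hm : 1 ≤ m) :
    ∃ b : (star (2*m+1) (2*m)).V, cls (2*m+1) (2*m) b = cls (2*m) (2*m+1) a := by
  have ha := a.isLt
  by_cases h0 : a.val = 0
  · refine ⟨⟨0, by omega⟩, ?_⟩
    show clsN (2*m+1) 0 = clsN (2*m) a.val
    unfold clsN; split_ifs <;> first | contradiction | omega | (simp; omega) | simp_all
  by_cases h1 : a.val ≤ 2*m
  · refine ⟨⟨1, by omega⟩, ?_⟩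
    show clsN (2*m+1) 1 = clsN (2*m) a.val
    unfold clsN; split_ifs <;> first | contradiction | omega | (simp; omega) | simp_all
  · refine ⟨⟨2*m+2, by omega⟩, ?_⟩
    show clsN (2*m+1) (2*m+2) = clsN (2*m) a.val
    unfold clsN; split_ifs <;> first | contradiction | omega | (simp; omega) | simp_all

open Classical in
lemma key (m : ℕ) : ∀ (φ : FOC2 Empty Bool), φ.thresholdsLe m →
    ∀ (σ1 : Var → (star (2*m+1) (2*m)).V) (σ2 : Var → (star (2*m) (2*m+1)).V),
    (∀ v, cls (2*m+1) (2*m) (σ1 v) = cls (2*m) (2*m+1) (σ2 v)) →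
    ((star (2*m+1) (2*m)).sat σ1 φ ↔ (star (2*m) (2*m+1)).sat σ2 φ) := by
  intro φ
  induction φ with
  | tru => intro _ _ _ _; simp [MRGraph.sat]
  | atom p v => exact p.elim
  | rel r u w =>
      intro _ σ1 σ2 hσ
      show (star (2*m+1) (2*m)).rel r (σ1 u) (σ1 w) ↔
        (star (2*m) (2*m+1)).rel r (σ2 u) (σ2 w)
      rw [rel_iff, rel_iff, hσ u, hσ w]
  | and φ ψ ihφ ihψ =>
      intro hth σ1 σ2 hσ
      exact and_congr (ihφ hth.1 σ1 σ2 hσ) (ihψ hth.2 σ1 σ2 hσ)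
  | or φ ψ ihφ ihψ =>
      intro hth σ1 σ2 hσ
      exact or_congr (ihφ hth.1 σ1 σ2 hσ) (ihψ hth.2 σ1 σ2 hσ)
  | not φ ih =>
      intro hth σ1 σ2 hσ
      exact not_congr (ih hth σ1 σ2 hσ)
  | exge n v φ ih =>
      intro hth σ1 σ2 hσ
      obtain ⟨hn, hthφ⟩ := hth
      rw [sat_exge_iff, sat_exge_iff]
      set T1 := Finset.univ.filter
        (fun a => (star (2*m+1) (2*m)).sat (Function.update σ1 v a) φ) with hT1
      set T2 := Finset.univ.filter
        (fun a => (star (2*m) (2*m+1)).sat (Function.update σ2 v a) φ) with hT2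
      have mem_iff : ∀ (a1 : (star (2*m+1) (2*m)).V) (a2 : (star (2*m) (2*m+1)).V),
          cls (2*m+1) (2*m) a1 = cls (2*m) (2*m+1) a2 → (a1 ∈ T1 ↔ a2 ∈ T2) := by
        intro a1 a2 hcls
        rw [hT1, hT2]
        simp only [Finset.mem_filter, Finset.mem_univ, true_and]
        refine ih hthφ _ _ (fun w => ?_)
        rcases eq_or_ne w v with rfl | hw
        · simpa using hcls
        · simpa [Function.update_apply, hw] using hσ w
      rcases Nat.eq_zero_or_pos n with rfl | hn1
      · simp
      have hm : 1 ≤ m := le_trans hn1 hn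
      by_cases H1 : ∀ a ∈ T1, cls (2*m+1) (2*m) a = 0
      · by_cases H2 : ∀ a ∈ T2, cls (2*m) (2*m+1) a = 0
        · have c1 : (starCenter (2*m+1) (2*m)) ∈ T1 ↔ (starCenter (2*m) (2*m+1)) ∈ T2 :=
            mem_iff _ _ (by simp [cls, starCenter, clsN])
          have s1 : T1 ⊆ {starCenter (2*m+1) (2*m)} := fun a ha =>
            Finset.mem_singleton.mpr (Fin.ext ((clsN_eq_zero _ _).mp (H1 a ha)))
          have s2 : T2 ⊆ {starCenter (2*m) (2*m+1)} := fun a ha =>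
            Finset.mem_singleton.mpr (Fin.ext ((clsN_eq_zero _ _).mp (H2 a ha)))
          have hcard : T1.card = T2.card := by
            rcases Finset.subset_singleton_iff.mp s1 with h | h <;>
              rcases Finset.subset_singleton_iff.mp s2 with h' | h' <;>
                simp [h, h'] at c1 ⊢
          rw [hcard]
        · push_neg at H2
          obtain ⟨a2, ha2, hc2⟩ := H2
          set c := cls (2*m) (2*m+1) a2 with hcdef
          have hc12 : c = 1 ∨ c = 2 := by
            have hv : a2.val ≠ 0 := fun h => hc2 ((clsN_eq_zero _ _).mpr h)
            rw [hcdef]; unfold cls clsN; split_ifs <;> simp_all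
          have hT1all : ∀ b, cls (2*m+1) (2*m) b = c → b ∈ T1 := fun b hb =>
            (mem_iff b a2 hb).mpr ha2
          have hT2all : ∀ b, cls (2*m) (2*m+1) b = c → b ∈ T2 := by
            intro b hb
            obtain ⟨b', hb'⟩ := transfer21 m b hm
            exact (mem_iff b' b hb').mp (hT1all b' (hb'.trans hb))
          have l1 : m ≤ T1.card := lower_bound _ _ m c
            (by rcases hc12 with h | h
                · exact Or.inl ⟨h, by omega⟩
                · exact Or.inr ⟨h, by omega⟩) T1 hT1all
          have l2 : m ≤ T2.card := lower_bound _ _ m c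
            (by rcases hc12 with h | h
                · exact Or.inl ⟨h, by omega⟩
                · exact Or.inr ⟨h, by omega⟩) T2 hT2all
          constructor <;> intro _ <;> omega
      · push_neg at H1
        obtain ⟨a1, ha1, hc1⟩ := H1
        set c := cls (2*m+1) (2*m) a1 with hcdef
        have hc12 : c = 1 ∨ c = 2 := by
          have hv : a1.val ≠ 0 := fun h => hc1 ((clsN_eq_zero _ _).mpr h)
          rw [hcdef]; unfold cls clsN; split_ifs <;> simp_all
        have hT2all : ∀ b, cls (2*m) (2*m+1) b = c → b ∈ T2 := fun b hb =>
          (mem_iff a1 b hb.symm).mp ha1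
        have hT1all : ∀ b, cls (2*m+1) (2*m) b = c → b ∈ T1 := by
          intro b hb
          obtain ⟨b', hb'⟩ := transfer12 m b hm
          exact (mem_iff b b' hb'.symm).mpr (hT2all b' (hb'.trans hb))
        have l1 : m ≤ T1.card := lower_bound _ _ m c
          (by rcases hc12 with h | h
              · exact Or.inl ⟨h, by omega⟩
              · exact Or.inr ⟨h, by omega⟩) T1 hT1all
        have l2 : m ≤ T2.card := lower_bound _ _ m c
          (by rcases hc12 with h | h
              · exact Or.inl ⟨h, by omega⟩
              · exact Or.inr ⟨h, by omega⟩) T2 hT2all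
        constructor <;> intro _ <;> omega

/-- No `FOC2` formula with one free variable and all counting thresholds at most `m`
distinguishes the centre of `G(m)` (centre with `2m+1` r1-leaves and `2m` r2-leaves)
from the centre of `H(m)` (centre with `2m` r1-leaves and `2m+1` r2-leaves). -/
theorem stmt5 (m : ℕ) (φ : FOC2 Empty Bool)
    (hth : φ.thresholdsLe m) (hfv : φ.freeVars ⊆ {Var.x}) :
    ((star (2 * m + 1) (2 * m)).sat (fun _ => starCenter (2 * m + 1) (2 * m)) φ ↔
     (star (2 * m) (2 * m + 1)).sat (fun _ => starCenter (2 * m) (2 * m + 1)) φ) := by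
  have := key m φ hth (fun _ => starCenter (2 * m + 1) (2 * m))
    (fun _ => starCenter (2 * m) (2 * m + 1)) (fun v => by simp [cls, clsN, starCenter])
  simpa [two_mul] using this
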